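/- Let f ∈ Homeo^+(S^1) be hyperbolic, let g ∈ Homeo^+(S^1) satisfy g^{-1}(f_-) ≠ f_+, and suppose that for all large N the map f^N ∘ g is hyperbolic with attracting point p_N and repelling point q_N. Then p_N → f_+ and q_N → g^{-1}(f_-) as N → ∞. -/

import Mathlib

open Filter Topology

section Auxiliary
open Set Function

lemma fixed_of_tendsto {X : Type*} [TopologicalSpace X] [T2Space X] {F : X → X}
    (hF : Continuous F) {x L : X} (h : Tendsto (fun n : ℕ => F^[n] x) atTop (𝓝 L)) :
    F L = L := by
  have h1 : Tendsto (fun n : ℕ => F^[n+1] x) atTop (𝓝 L) :=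
    h.comp (tendsto_add_atTop_nat 1)
  have h2 : Tendsto (fun n : ℕ => F (F^[n] x)) atTop (𝓝 (F L)) :=
    (hF.tendsto L).comp h
  simp only [Function.iterate_succ_apply'] at h1
  exact tendsto_nhds_unique h2 h1

lemma real_lt_iterfix {H : ℝ → ℝ} (hm : StrictMono H) {c : ℝ}
    (hH : ∀ x : ℝ, Tendsto (fun n : ℕ => H^[n] x) atTop (𝓝 c)) :
    ∀ x : ℝ, x < c → x < H x := by
  intro x hx
  by_contra hle
  push_neg at hle
  have hle' : ∀ n : ℕ, H^[n] x ≤ x := by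
    intro n
    induction n with
    | zero => simp
    | succ n ih =>
      rw [Function.iterate_succ_apply]
      calc H^[n] (H x) ≤ H^[n] x := (hm.iterate n).monotone hle
        _ ≤ x := ih
  have := le_of_tendsto (hH x) (Eventually.of_forall hle')
  linarith

lemma real_gt_iterfix {H : ℝ → ℝ} (hm : StrictMono H) {c : ℝ}
    (hH : ∀ x : ℝ, Tendsto (fun n : ℕ => H^[n] x) atTop (𝓝 c)) :
    ∀ x : ℝ, c < x → H x < x := by
  intro x hx
  by_contra hle
  push_neg at hle
  have hle' : ∀ n : ℕ, x ≤ H^[n] x := by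
    intro n
    induction n with
    | zero => simp
    | succ n ih =>
      rw [Function.iterate_succ_apply]
      calc x ≤ H^[n] x := ih
        _ ≤ H^[n] (H x) := (hm.iterate n).monotone hle
  have := ge_of_tendsto (hH x) (Eventually.of_forall hle')
  linarith

lemma real_invariant_nbhd (H : ℝ ≃ₜ ℝ) (c : ℝ)
    (hH : ∀ x : ℝ, Tendsto (fun n : ℕ => (⇑H)^[n] x) atTop (𝓝 c))
    (W : Set ℝ) (hWo : IsOpen W) (hcW : c ∈ W) :
    ∃ U : Set ℝ, IsOpen U ∧ c ∈ U ∧ U ⊆ W ∧ ∀ x ∈ U, H x ∈ U := by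
  have hc : H c = c := fixed_of_tendsto H.continuous (hH c)
  have hcs : H.symm c = c := by
    conv_lhs => rw [← hc]
    exact H.symm_apply_apply c
  obtain ⟨ε, hε, hball⟩ := Metric.isOpen_iff.1 hWo c hcW
  rw [Real.ball_eq_Ioo] at hball
  rcases H.continuous.strictMono_of_inj H.injective with hm | ha
  · refine ⟨Ioo (c - ε) (c + ε), isOpen_Ioo, by constructor <;> linarith, hball, ?_⟩
    rintro x ⟨hx1, hx2⟩
    rcases lt_trichotomy x c with h | h | h
    · have h1 := real_lt_iterfix hm hH x h
      have h2 : H x < c := by rw [← hc]; exact hm h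
      exact ⟨by linarith, by linarith⟩
    · subst h; rw [hc]; exact ⟨by linarith, by linarith⟩
    · have h1 := real_gt_iterfix hm hH x h
      have h2 : c < H x := by rw [← hc]; exact hm h
      exact ⟨by linarith, by linarith⟩
  · -- antitone case
    have has : StrictAnti (⇑H.symm) := by
      intro u v huv
      by_contra hle
      push_neg at hle
      have := ha.antitone hle
      rw [H.apply_symm_apply, H.apply_symm_apply] at this
      exact absurd this (not_le.2 huv)
    -- H ∘ H is strictly monotone with same limit
    set H2 : ℝ ≃ₜ ℝ := H.trans H with hH2def
    have hH2app : ∀ x, H2 x = H (H x) := fun x => rfl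
    have hm2 : StrictMono (⇑H2) := fun u v huv => ha (ha huv)
    have hit2 : ∀ (x : ℝ) (n : ℕ), (⇑H2)^[n] x = (⇑H)^[2*n] x := by
      intro x n
      rw [Function.iterate_mul]
      have h22 : (⇑H)^[2] = ⇑H2 := by
        funext y
        show (⇑H)^[2] y = H (H y)
        rw [show (2:ℕ) = 1+1 from rfl, Function.iterate_add_apply]
        simp
      rw [h22]
    have h2n : Tendsto (fun n : ℕ => 2 * n) atTop atTop :=
      tendsto_atTop_mono (fun n => Nat.le_mul_of_pos_left n two_pos) tendsto_id
    have hH2 : ∀ x : ℝ, Tendsto (fun n : ℕ => (⇑H2)^[n] x) atTop (𝓝 c) := by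
      intro x
      have := (hH x).comp h2n
      simpa [Function.comp_def, hit2] using this
    -- choose a close to c on the left with H a, H.symm a < c + ε
    have hev : ∀ᶠ t in 𝓝 c, H t < c + ε ∧ H.symm t < c + ε := by
      have e1 : ∀ᶠ t in 𝓝 c, H t < c + ε := by
        have h0 : Tendsto H (𝓝 c) (𝓝 (H c)) := H.continuous.tendsto c
        rw [hc] at h0
        exact h0.eventually (Filter.Tendsto.eventually_lt_const (by linarith) tendsto_id)
      have e2 : ∀ᶠ t in 𝓝 c, H.symm t < c + ε := by
        have h0 : Tendsto (⇑H.symm) (𝓝 c) (𝓝 (H.symm c)) := H.symm.continuous.tendsto c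
        rw [hcs] at h0
        exact h0.eventually (Filter.Tendsto.eventually_lt_const (by linarith) tendsto_id)
      exact e1.and e2
    obtain ⟨δ, hδ, hδball⟩ := Metric.eventually_nhds_iff_ball.1 hev
    set a : ℝ := c - min δ ε / 2 with hadef
    have hminpos : 0 < min δ ε := lt_min hδ hε
    have hac : a < c := by rw [hadef]; linarith
    have haW : c - ε < a := by
      have h1 : min δ ε ≤ ε := min_le_right _ _
      rw [hadef]; linarith
    have haball : a ∈ Metric.ball c δ := by
      have h1 : min δ ε ≤ δ := min_le_left _ _
      rw [hadef, Metric.mem_ball, Real.dist_eq, abs_lt]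
      constructor <;> linarith
    obtain ⟨hHa, hHsa⟩ := hδball a haball
    have hHac : c < H a := by rw [← hc]; exact ha hac
    have hHsac : c < H.symm a := by rw [← hcs]; exact has hac
    have h2a : a < H2 a := real_lt_iterfix hm2 hH2 a hac
    have hlt : H a < H.symm a := by
      by_contra hle
      push_neg at hle
      have := ha.antitone hle
      rw [H.apply_symm_apply, ← hH2app] at this
      linarith
    set b : ℝ := (H a + H.symm a) / 2 with hbdef
    have hab1 : H a < b := by rw [hbdef]; linarith
    have hab2 : b < H.symm a := by rw [hbdef]; linarith
    have hcb : c < b := by rw [hbdef]; linarith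
    have hbε : b < c + ε := by rw [hbdef]; linarith
    refine ⟨Ioo a b, isOpen_Ioo, ⟨hac, hcb⟩, fun t ht => hball ⟨by linarith [ht.1], by
      linarith [ht.2]⟩, ?_⟩
    rintro x ⟨hx1, hx2⟩
    constructor
    · have : H (H.symm a) < H b := ha (by linarith : b < H.symm a)
      rw [H.apply_symm_apply] at this
      have := ha hx2
      linarith
    · have := ha hx1
      linarith

/-- affine order isomorphism between `Ioo (-1) 1` and `Ioo α (α+1)` -/
noncomputable def ooIso (α : ℝ) : (Ioo (-1:ℝ) 1) ≃o (Ioo α (α+1)) where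
  toFun t := ⟨α + (t.1+1)/2, by
    obtain ⟨h1, h2⟩ := mem_Ioo.1 t.2
    rw [mem_Ioo]; constructor <;> linarith⟩
  invFun s := ⟨2*(s.1-α)-1, by
    obtain ⟨h1, h2⟩ := mem_Ioo.1 s.2
    rw [mem_Ioo]; constructor <;> linarith⟩
  left_inv t := Subtype.ext (by ring)
  right_inv s := Subtype.ext (by ring)
  map_rel_iff' {a b} := by
    rw [Equiv.coe_fn_mk, Subtype.mk_le_mk, ← Subtype.coe_le_coe]
    constructor <;> intro h <;> linarith

/-- A homeomorphism from `ℝ` to the circle punctured at `m`. -/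
noncomputable def puncturedChart (m : AddCircle (1:ℝ)) :
    ℝ ≃ₜ ({m}ᶜ : Set (AddCircle (1:ℝ))) :=
  let α := (AddCircle.eq_coe_Ico m).choose
  let P := AddCircle.openPartialHomeomorphCoe (1:ℝ) α
  (orderIsoIooNegOneOne ℝ).toHomeomorph.trans
    ((ooIso α).toHomeomorph.trans
      ((Homeomorph.setCongr (show Ioo α (α+1) = P.source from rfl)).trans
        (P.toHomeomorphSourceTarget.trans (Homeomorph.setCongr (by
          show ({((AddCircle.eq_coe_Ico m).choose : AddCircle (1:ℝ))}ᶜ : Set _) = ({m}ᶜ : Set _)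
          rw [(AddCircle.eq_coe_Ico m).choose_spec.2])))))

lemma circle_invariant_nbhd (f : AddCircle (1:ℝ) ≃ₜ AddCircle (1:ℝ))
    (p m : AddCircle (1:ℝ)) (hpm : p ≠ m) (hfm : f m = m)
    (hattr : ∀ x, x ≠ m → Tendsto (fun n : ℕ => (⇑f)^[n] x) atTop (𝓝 p))
    (U : Set (AddCircle (1:ℝ))) (hUo : IsOpen U) (hpU : p ∈ U) :
    ∃ V, IsOpen V ∧ p ∈ V ∧ V ⊆ U ∧ ∀ x ∈ V, f x ∈ V := by
  set S : Set (AddCircle (1:ℝ)) := {m}ᶜ with hS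
  have hSo : IsOpen S := isOpen_compl_singleton
  have hfsm : f.symm m = m := by
    conv_lhs => rw [← hfm]
    exact f.symm_apply_apply m
  -- restriction of f to S
  have hmemS : ∀ x : AddCircle (1:ℝ), x ∈ S ↔ x ≠ m := by
    intro x; simp [hS]
  have hfS : ∀ x : S, f x.1 ∈ S := by
    intro x
    rw [hmemS]
    intro h
    exact ((hmemS x.1).1 x.2) (f.injective (h.trans hfm.symm))
  have hfsS : ∀ x : S, f.symm x.1 ∈ S := by
    intro x
    rw [hmemS]
    intro h
    exact ((hmemS x.1).1 x.2) (f.symm.injective (h.trans hfsm.symm))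
  set f' : S ≃ₜ S :=
    { toFun := fun x => ⟨f x.1, hfS x⟩
      invFun := fun x => ⟨f.symm x.1, hfsS x⟩
      left_inv := fun x => Subtype.ext (f.symm_apply_apply x.1)
      right_inv := fun x => Subtype.ext (f.apply_symm_apply x.1)
      continuous_toFun := (f.continuous.comp continuous_subtype_val).subtype_mk hfS
      continuous_invFun := (f.symm.continuous.comp continuous_subtype_val).subtype_mk hfsS }
    with hf'
  have hf'val : ∀ x : S, (f' x : AddCircle (1:ℝ)) = f x.1 := fun x => rfl
  set Φ : ℝ ≃ₜ S := puncturedChart m with hΦ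
  set H : ℝ ≃ₜ ℝ := Φ.trans (f'.trans Φ.symm) with hH
  have hHapp : ∀ x : ℝ, H x = Φ.symm (f' (Φ x)) := fun x => rfl
  have hiter : ∀ (x : ℝ) (n : ℕ), ((Φ ((⇑H)^[n] x)) : AddCircle (1:ℝ)) = (⇑f)^[n] (Φ x).1 := by
    intro x n
    induction n with
    | zero => simp
    | succ n ih =>
      rw [Function.iterate_succ_apply', Function.iterate_succ_apply', hHapp,
        Φ.apply_symm_apply, hf'val, ih]
  set c : ℝ := Φ.symm ⟨p, (hmemS p).2 hpm⟩ with hc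
  have hΦc : (Φ c : AddCircle (1:ℝ)) = p := by rw [hc, Φ.apply_symm_apply]
  have hHlim : ∀ x : ℝ, Tendsto (fun n : ℕ => (⇑H)^[n] x) atTop (𝓝 c) := by
    intro x
    have h1 : Tendsto (fun n : ℕ => (⇑f)^[n] (Φ x).1) atTop (𝓝 p) :=
      hattr (Φ x).1 ((hmemS _).1 (Φ x).2)
    have h2 : Tendsto (fun n : ℕ => Φ ((⇑H)^[n] x)) atTop (𝓝 ⟨p, (hmemS p).2 hpm⟩) := by
      rw [Topology.IsEmbedding.subtypeVal.tendsto_nhds_iff]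
      simpa [Function.comp_def, hiter x] using h1
    have h3 := (Φ.symm.continuous.tendsto _).comp h2
    simpa [Function.comp_def, hc] using h3
  -- transfer the open set U to ℝ
  set W : Set ℝ := (fun x : ℝ => ((Φ x : AddCircle (1:ℝ)))) ⁻¹' U with hW
  have hWo : IsOpen W := (continuous_subtype_val.comp Φ.continuous).isOpen_preimage U hUo
  have hcW : c ∈ W := by rw [hW, mem_preimage, hΦc]; exact hpU
  obtain ⟨V₀, hV₀o, hcV₀, hV₀W, hV₀inv⟩ := real_invariant_nbhd H c hHlim W hWo hcW
  refine ⟨(fun x : ℝ => ((Φ x : AddCircle (1:ℝ)))) '' V₀, ?_, ?_, ?_, ?_⟩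
  · exact (hSo.isOpenMap_subtype_val.comp Φ.isOpenMap) V₀ hV₀o
  · exact ⟨c, hcV₀, hΦc⟩
  · rintro _ ⟨x, hx, rfl⟩
    exact hV₀W hx
  · rintro _ ⟨x, hx, rfl⟩
    refine ⟨H x, hV₀inv x hx, ?_⟩
    show ((Φ (H x) : AddCircle (1:ℝ))) = f ((Φ x : AddCircle (1:ℝ)))
    rw [hHapp, Φ.apply_symm_apply, hf'val]

lemma uniform_attract (f : AddCircle (1:ℝ) ≃ₜ AddCircle (1:ℝ))
    (p m : AddCircle (1:ℝ)) (hpm : p ≠ m) (hfm : f m = m)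
    (hattr : ∀ x, x ≠ m → Tendsto (fun n : ℕ => (⇑f)^[n] x) atTop (𝓝 p))
    (U : Set (AddCircle (1:ℝ))) (hUo : IsOpen U) (hpU : p ∈ U)
    (K : Set (AddCircle (1:ℝ))) (hK : IsClosed K) (hmK : m ∉ K) :
    ∃ N : ℕ, ∀ n ≥ N, ∀ x ∈ K, (⇑f)^[n] x ∈ U := by
  obtain ⟨V, hVo, hpV, hVU, hVinv⟩ := circle_invariant_nbhd f p m hpm hfm hattr U hUo hpU
  set B : ℕ → Set (AddCircle (1:ℝ)) := fun n => ((⇑f)^[n]) ⁻¹' V with hB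
  have hBo : ∀ n, IsOpen (B n) := fun n => (f.continuous.iterate n).isOpen_preimage V hVo
  have hBmono : Monotone B := by
    apply monotone_nat_of_le_succ
    intro n x hx
    have : (⇑f)^[n+1] x = f ((⇑f)^[n] x) := Function.iterate_succ_apply' _ _ _
    rw [mem_preimage] at hx ⊢
    rw [this]
    exact hVinv _ hx
  have hcover : K ⊆ ⋃ n, B n := by
    intro x hx
    have hxm : x ≠ m := fun h => hmK (h ▸ hx)
    have := (hattr x hxm).eventually (hVo.mem_nhds hpV)
    obtain ⟨n, hn⟩ := this.exists
    exact mem_iUnion.2 ⟨n, hn⟩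
  have hKc : IsCompact K := hK.isCompact
  obtain ⟨t, ht⟩ := hKc.elim_finite_subcover B hBo hcover
  refine ⟨t.sup id, fun n hn x hx => ?_⟩
  have : x ∈ B (t.sup id) := by
    obtain ⟨i, hi, hxi⟩ := mem_iUnion₂.1 (ht hx)
    exact hBmono (Finset.le_sup (f := id) hi) hxi
  exact hVU (hBmono hn this)

lemma exists_two_ne (z : AddCircle (1:ℝ)) :
    ∃ u v : AddCircle (1:ℝ), u ≠ v ∧ u ≠ z ∧ v ≠ z := by
  refine ⟨z + ((1/3 : ℝ) : AddCircle (1:ℝ)), z + ((2/3 : ℝ) : AddCircle (1:ℝ)), ?_, ?_, ?_⟩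
  · intro h
    rw [add_right_inj] at h
    rw [AddCircle.coe_eq_coe_iff_of_mem_Ico (a := (0:ℝ))
        (by rw [mem_Ico]; norm_num) (by rw [mem_Ico]; norm_num)] at h
    norm_num at h
  · intro h
    rw [add_eq_left] at h
    rw [AddCircle.coe_eq_zero_iff_of_mem_Ico (by norm_num)] at h
    norm_num at h
  · intro h
    rw [add_eq_left] at h
    rw [AddCircle.coe_eq_zero_iff_of_mem_Ico (by norm_num)] at h
    norm_num at h

end Auxiliary

/-- if `f` is hyperbolic (attracting `p`, repelling `m`), `g⁻¹(m) ≠ p`, and for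
all large `N` the composition `f^N ∘ g` is hyperbolic with attracting point `pN N` and
repelling point `qN N`, then `pN N → p` and `qN N → g⁻¹(m)` as `N → ∞`. -/
theorem hyperbolic_power_comp_fixed_points_limit
    (f g : AddCircle (1 : ℝ) ≃ₜ AddCircle (1 : ℝ))
    (p m : AddCircle (1 : ℝ)) (hpm : p ≠ m)
    (hattr : ∀ x, x ≠ m → Tendsto (fun n : ℕ => (⇑f)^[n] x) atTop (𝓝 p))
    (hrep : ∀ x, x ≠ p → Tendsto (fun n : ℕ => (⇑f.symm)^[n] x) atTop (𝓝 m))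
    (hgm : g.symm m ≠ p) (pN qN : ℕ → AddCircle (1 : ℝ)) (N₀ : ℕ)
    (hhyp : ∀ N ≥ N₀, pN N ≠ qN N ∧
      (∀ x, x ≠ qN N →
        Tendsto (fun n : ℕ => (fun y => (⇑f)^[N] (g y))^[n] x) atTop (𝓝 (pN N))) ∧
      (∀ x, x ≠ pN N →
        Tendsto (fun n : ℕ => (fun y => g.symm ((⇑f.symm)^[N] y))^[n] x) atTop (𝓝 (qN N)))) :
    Tendsto pN atTop (𝓝 p) ∧ Tendsto qN atTop (𝓝 (g.symm m)) := by
  have hfsm : f.symm m = m := fixed_of_tendsto f.symm.continuous (hrep m (Ne.symm hpm))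
  have hfm : f m = m := by
    conv_lhs => rw [← hfsm]
    exact f.apply_symm_apply m
  have hfp : f p = p := fixed_of_tendsto f.continuous (hattr p hpm)
  have hfsp : f.symm p = p := by
    conv_lhs => rw [← hfp]
    exact f.symm_apply_apply p
  constructor
  · -- pN → p
    rw [tendsto_atTop_nhds]
    intro U hpU hUo
    have hgpm : g p ≠ m := by
      intro h
      exact hgm (by rw [← h, g.symm_apply_apply])
    obtain ⟨M₀, W₀, hM₀o, hW₀o, hgpM₀, hmW₀, hdisj⟩ := t2_separation hgpm
    have hs : U ∩ g ⁻¹' M₀ ∈ 𝓝 p :=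
      inter_mem (hUo.mem_nhds hpU)
        (g.continuous.continuousAt.preimage_mem_nhds (hM₀o.mem_nhds hgpM₀))
    obtain ⟨t, htp, htc, hts⟩ := exists_mem_nhds_isClosed_subset hs
    set U₁ : Set (AddCircle (1:ℝ)) := interior t with hU₁
    have hU₁o : IsOpen U₁ := isOpen_interior
    have hpU₁ : p ∈ U₁ := mem_interior_iff_mem_nhds.2 htp
    have hclU₁ : closure U₁ ⊆ U := by
      intro x hx
      have : x ∈ t := htc.closure_eq ▸ closure_mono interior_subset hx
      exact (hts this).1
    have hU₁M₀ : ∀ x ∈ U₁, g x ∈ M₀ := fun x hx => (hts (interior_subset hx)).2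
    obtain ⟨u₁, u₂, hu12, hu1m, hu2m⟩ := exists_two_ne m
    set W : Set (AddCircle (1:ℝ)) := W₀ ∩ {u₁}ᶜ ∩ {u₂}ᶜ with hWdef
    have hWo : IsOpen W :=
      ((hW₀o.inter isOpen_compl_singleton).inter isOpen_compl_singleton)
    have hmW : m ∈ W := ⟨⟨hmW₀, fun h => hu1m (Eq.symm h)⟩, fun h => hu2m (Eq.symm h)⟩
    set K : Set (AddCircle (1:ℝ)) := (g ⁻¹' W)ᶜ with hKdef
    have hKcl : IsClosed K := (hWo.preimage g.continuous).isClosed_compl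
    have hgKm : m ∉ g '' K := by
      rintro ⟨x, hxK, hgx⟩
      exact hxK (by rw [Set.mem_preimage, hgx]; exact hmW)
    have hgKcl : IsClosed (g '' K) := (hKcl.isCompact.image g.continuous).isClosed
    obtain ⟨N₁, hN₁⟩ := uniform_attract f p m hpm hfm hattr U₁ hU₁o hpU₁ (g '' K) hgKcl hgKm
    refine ⟨max N₀ N₁, fun N hN => ?_⟩
    have hNN₀ : N ≥ N₀ := le_trans (le_max_left _ _) hN
    have hNN₁ : N ≥ N₁ := le_trans (le_max_right _ _) hN
    obtain ⟨hpq, hattrN, -⟩ := hhyp N hNN₀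
    set F : AddCircle (1:ℝ) → AddCircle (1:ℝ) := fun y => (⇑f)^[N] (g y) with hF
    have hFK : ∀ x ∈ K, F x ∈ U₁ := fun x hx => hN₁ N hNN₁ (g x) ⟨x, hx, rfl⟩
    have hU₁K : U₁ ⊆ K := by
      intro x hx hmem
      rw [Set.mem_preimage] at hmem
      exact absurd (hU₁M₀ x hx) (fun h => (Set.disjoint_left.1 hdisj h) hmem.1.1)
    -- pick a point different from qN N in K
    have hx₁K : g.symm u₁ ∈ K := by
      intro hmem
      rw [Set.mem_preimage, g.apply_symm_apply] at hmem
      exact hmem.1.2 rfl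
    have hx₂K : g.symm u₂ ∈ K := by
      intro hmem
      rw [Set.mem_preimage, g.apply_symm_apply] at hmem
      exact hmem.2 rfl
    obtain ⟨x, hxK, hxq⟩ : ∃ x, x ∈ K ∧ x ≠ qN N := by
      by_cases h : g.symm u₁ = qN N
      · refine ⟨g.symm u₂, hx₂K, fun h2 => ?_⟩
        exact hu12 (g.symm.injective (h.trans h2.symm))
      · exact ⟨g.symm u₁, hx₁K, h⟩
    have htd := hattrN x hxq
    have hiterU : ∀ n : ℕ, 1 ≤ n → F^[n] x ∈ U₁ := by
      intro n hn
      induction n with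
      | zero => omega
      | succ k ih =>
        rcases Nat.eq_or_lt_of_le hn with h | h
        · rw [← h]
          simpa using hFK x hxK
        · have hk : 1 ≤ k := by omega
          rw [Function.iterate_succ_apply']
          exact hFK _ (hU₁K (ih hk))
    have hmem : pN N ∈ closure U₁ :=
      mem_closure_of_tendsto htd (eventually_atTop.2 ⟨1, fun n hn => hiterU n hn⟩)
    exact hclU₁ hmem
  · -- qN → g.symm m
    rw [tendsto_atTop_nhds]
    intro U htU hUo
    obtain ⟨T₀, W₀, hT₀o, hW₀o, htT₀, hpW₀, hdisj⟩ := t2_separation hgm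
    have hs : U ∩ T₀ ∈ 𝓝 (g.symm m) := inter_mem (hUo.mem_nhds htU) (hT₀o.mem_nhds htT₀)
    obtain ⟨t, htp, htc, hts⟩ := exists_mem_nhds_isClosed_subset hs
    set U₁ : Set (AddCircle (1:ℝ)) := interior t with hU₁
    have hU₁o : IsOpen U₁ := isOpen_interior
    have htU₁ : g.symm m ∈ U₁ := mem_interior_iff_mem_nhds.2 htp
    have hclU₁ : closure U₁ ⊆ U := by
      intro x hx
      have : x ∈ t := htc.closure_eq ▸ closure_mono interior_subset hx
      exact (hts this).1
    have hU₁T₀ : U₁ ⊆ T₀ := fun x hx => (hts (interior_subset hx)).2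
    obtain ⟨a', b', hab, hap, hbp⟩ := exists_two_ne p
    set W : Set (AddCircle (1:ℝ)) := W₀ ∩ {a'}ᶜ ∩ {b'}ᶜ with hWdef
    have hWo : IsOpen W :=
      ((hW₀o.inter isOpen_compl_singleton).inter isOpen_compl_singleton)
    have hpW : p ∈ W := ⟨⟨hpW₀, fun h => hap (Eq.symm h)⟩, fun h => hbp (Eq.symm h)⟩
    set K : Set (AddCircle (1:ℝ)) := Wᶜ with hKdef
    have hKcl : IsClosed K := hWo.isClosed_compl
    have hpK : p ∉ K := fun h => h hpW
    set V₁ : Set (AddCircle (1:ℝ)) := g '' U₁ with hV₁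
    have hV₁o : IsOpen V₁ := g.isOpenMap U₁ hU₁o
    have hmV₁ : m ∈ V₁ := ⟨g.symm m, htU₁, g.apply_symm_apply m⟩
    obtain ⟨N₂, hN₂⟩ := uniform_attract f.symm m p (Ne.symm hpm) hfsp hrep V₁ hV₁o hmV₁ K hKcl hpK
    refine ⟨max N₀ N₂, fun N hN => ?_⟩
    have hNN₀ : N ≥ N₀ := le_trans (le_max_left _ _) hN
    have hNN₂ : N ≥ N₂ := le_trans (le_max_right _ _) hN
    obtain ⟨hpq, -, hrepN⟩ := hhyp N hNN₀
    set G : AddCircle (1:ℝ) → AddCircle (1:ℝ) := fun y => g.symm ((⇑f.symm)^[N] y) with hG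
    have hGK : ∀ x ∈ K, G x ∈ U₁ := by
      intro x hx
      obtain ⟨u, hu, he⟩ := hN₂ N hNN₂ x hx
      show g.symm ((⇑f.symm)^[N] x) ∈ U₁
      rw [← he, g.symm_apply_apply]
      exact hu
    have hU₁K : U₁ ⊆ K := by
      intro x hx hmem
      exact absurd (hU₁T₀ hx) (fun h => (Set.disjoint_left.1 hdisj h) hmem.1.1)
    have haK : a' ∈ K := fun hmem => hmem.1.2 rfl
    have hbK : b' ∈ K := fun hmem => hmem.2 rfl
    obtain ⟨x, hxK, hxp⟩ : ∃ x, x ∈ K ∧ x ≠ pN N := by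
      by_cases h : a' = pN N
      · exact ⟨b', hbK, fun h2 => hab (h.trans h2.symm)⟩
      · exact ⟨a', haK, h⟩
    have htd := hrepN x hxp
    have hiterU : ∀ n : ℕ, 1 ≤ n → G^[n] x ∈ U₁ := by
      intro n hn
      induction n with
      | zero => omega
      | succ k ih =>
        rcases Nat.eq_or_lt_of_le hn with h | h
        · rw [← h]
          simpa using hGK x hxK
        · have hk : 1 ≤ k := by omega
          rw [Function.iterate_succ_apply']
          exact hGK _ (hU₁K (ih hk))
    have hmem : qN N ∈ closure U₁ :=
      mem_closure_of_tendsto htd (eventually_atTop.2 ⟨1, fun n hn => hiterU n hn⟩)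
    exact hclU₁ hmem
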